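/- arXiv:1502.01988 — 2 statements merged into one kernel-verified Lean document; each statement's English description precedes it below -/
import Mathlib

section
/- Let Z be a real random variable satisfying the tail bound P(|Z| > z) ≤ 2·exp(−c·z²/(2σ²)) for all z ≥ 0, with constants c, σ > 0. Then for any t ≥ 0, the soft-thresholded variable satisfies E[η_{σt}(Z)²] ≤ C·σ²·exp(−c·t²/2) for some constant C depending only on c. -/
open MeasureTheory Real Set Filter

/-- Soft-thresholding at level `t`: `η_t(y) = sign(y)·(|y| − t)₊`. -/
noncomputable def softThreshold (t y : ℝ) : ℝ := Real.sign y * max (|y| - t) 0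

lemma sq_softThreshold {s y : ℝ} (hs : 0 ≤ s) :
    (softThreshold s y) ^ 2 = (max (|y| - s) 0) ^ 2 := by
  unfold softThreshold
  rcases lt_trichotomy y 0 with h | h | h
  · rw [Real.sign_of_neg h]; ring
  · subst h
    rw [Real.sign_zero, abs_zero, max_eq_right (by linarith : (0:ℝ) - s ≤ 0)]
    ring
  · rw [Real.sign_of_pos h]; ring

lemma integral_mul_exp_neg_mul_sq_Ioi {b : ℝ} (hb : 0 < b) :
    ∫ r in Ioi (0:ℝ), r * Real.exp (-b * r ^ 2) = (2 * b)⁻¹ := by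
  have A : ∀ x : ℝ, HasDerivAt (fun x => -(2 * b)⁻¹ * Real.exp (-b * x ^ 2))
      (x * Real.exp (-b * x ^ 2)) x := by
    intro x
    have hb' : b ≠ 0 := hb.ne'
    refine (((hasDerivAt_pow 2 x).const_mul (-b)).exp.const_mul (-(2 * b)⁻¹)).congr_deriv ?_
    field_simp
    ring
  have B : Tendsto (fun y : ℝ ↦ -(2 * b)⁻¹ * Real.exp (-b * y ^ 2)) atTop
      (nhds (-(2 * b)⁻¹ * 0)) := by
    refine Tendsto.const_mul _ ?_
    exact Real.tendsto_exp_atBot.comp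
      ((tendsto_pow_atTop two_ne_zero).const_mul_atTop_of_neg (neg_lt_zero.2 hb))
  have := integral_Ioi_of_hasDerivAt_of_tendsto' (a := 0) (fun x _ => A x)
      (integrable_mul_exp_neg_mul_sq hb).integrableOn B
  simpa using this

theorem stmt_2 (c : ℝ) (hc : 0 < c) :
    ∃ C > (0 : ℝ), ∀ (Ω : Type) [MeasureSpace Ω]
      [IsProbabilityMeasure (volume : Measure Ω)]
      (Z : Ω → ℝ), Measurable Z → ∀ (σ t : ℝ), 0 < σ → 0 ≤ t →
      (∀ z : ℝ, 0 ≤ z → volume {ω | z < |Z ω|}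
        ≤ ENNReal.ofReal (2 * Real.exp (-(c * z ^ 2) / (2 * σ ^ 2)))) →
      ∫ ω, (softThreshold (σ * t) (Z ω)) ^ 2
        ≤ C * σ ^ 2 * Real.exp (-(c * t ^ 2) / 2) := by
  refine ⟨4 / c, by positivity, ?_⟩
  intro Ω _ _ Z hZ σ t hσ ht htail
  have hs0 : 0 ≤ σ * t := by positivity
  set f : Ω → ℝ := fun ω => max (|Z ω| - σ * t) 0 with hf
  have hfm : Measurable f := (hZ.abs.sub measurable_const).max measurable_const
  simp only [sq_softThreshold hs0]
  rw [integral_eq_lintegral_of_nonneg_ae (Filter.Eventually.of_forall fun ω => sq_nonneg _)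
      ((hfm.pow_const 2).aestronglyMeasurable)]
  have hb : 0 < c / (2 * σ ^ 2) := by positivity
  set b := c / (2 * σ ^ 2) with hbdef
  set K := Real.exp (-(c * t ^ 2) / 2) with hK
  have hK0 : 0 < K := Real.exp_pos _
  -- Layer cake formula with g z = 2 z
  have layer : ∫⁻ ω, ENNReal.ofReal (f ω ^ 2)
      = ∫⁻ z in Ioi 0, volume {ω | z < f ω} * ENNReal.ofReal (2 * z) := by
    have h := lintegral_comp_eq_lintegral_meas_lt_mul (volume : Measure Ω)
      (f := f) (g := fun z => 2 * z)
      (Filter.Eventually.of_forall fun ω => le_max_right _ _)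
      hfm.aemeasurable
      (fun r _ => ((continuous_const.mul continuous_id).intervalIntegrable 0 r))
      ((ae_restrict_iff' measurableSet_Ioi).mpr
        (Filter.Eventually.of_forall fun z hz => by
          have := mem_Ioi.mp hz; positivity))
    have hval : ∀ x : ℝ, (∫ u in (0:ℝ)..x, 2 * u) = x ^ 2 := by
      intro x
      rw [intervalIntegral.integral_const_mul, integral_id]
      ring
    simp_rw [hval] at h
    exact h
  rw [layer]
  -- Pointwise bound on the tail integrand
  have mono1 : ∫⁻ z in Ioi 0, volume {ω | z < f ω} * ENNReal.ofReal (2 * z)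
      ≤ ∫⁻ z in Ioi 0, ENNReal.ofReal (4 * K * (z * Real.exp (-b * z ^ 2))) := by
    refine setLIntegral_mono (by fun_prop) ?_
    intro z hz
    have hz0 : 0 < z := hz
    have hseteq : {ω | z < f ω} = {ω | (z + σ * t) < |Z ω|} := by
      ext ω
      simp only [hf, mem_setOf_eq, lt_max_iff]
      constructor
      · rintro (h | h)
        · linarith
        · exact absurd h (not_lt.mpr hz0.le)
      · intro h; left; linarith
    have htail' := htail (z + σ * t) (by positivity)
    have hkey : -(c * (z + σ * t) ^ 2) / (2 * σ ^ 2)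
        ≤ -(c * t ^ 2) / 2 + -b * z ^ 2 := by
      have h2 : (0:ℝ) < 2 * σ ^ 2 := by positivity
      rw [hbdef, div_le_iff₀ h2]
      have heq : (-(c * t ^ 2) / 2 + -(c / (2 * σ ^ 2)) * z ^ 2) * (2 * σ ^ 2)
          = -(c * t ^ 2) * σ ^ 2 - c * z ^ 2 := by
        field_simp
        ring
      rw [heq]
      nlinarith [mul_nonneg (mul_nonneg (mul_nonneg hc.le hz0.le) hσ.le) ht]
    have hexp : Real.exp (-(c * (z + σ * t) ^ 2) / (2 * σ ^ 2))
        ≤ K * Real.exp (-b * z ^ 2) := by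
      rw [hK, ← Real.exp_add]
      exact Real.exp_le_exp.mpr hkey
    calc volume {ω | z < f ω} * ENNReal.ofReal (2 * z)
        ≤ ENNReal.ofReal (2 * Real.exp (-(c * (z + σ * t) ^ 2) / (2 * σ ^ 2)))
            * ENNReal.ofReal (2 * z) := by
          rw [hseteq]; exact mul_le_mul_left htail' _
      _ = ENNReal.ofReal ((2 * Real.exp (-(c * (z + σ * t) ^ 2) / (2 * σ ^ 2))) * (2 * z)) :=
          (ENNReal.ofReal_mul (by positivity)).symm
      _ ≤ ENNReal.ofReal (4 * K * (z * Real.exp (-b * z ^ 2))) := by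
          apply ENNReal.ofReal_le_ofReal
          have := mul_le_mul_of_nonneg_right hexp (by positivity : (0:ℝ) ≤ 4 * z)
          nlinarith [Real.exp_pos (-b * z ^ 2)]
  -- Evaluate the Gaussian-type integral
  have hint : IntegrableOn (fun z : ℝ => 4 * K * (z * Real.exp (-b * z ^ 2))) (Ioi 0) :=
    ((integrable_mul_exp_neg_mul_sq hb).const_mul (4 * K)).integrableOn
  have heq2 : ∫⁻ z in Ioi 0, ENNReal.ofReal (4 * K * (z * Real.exp (-b * z ^ 2)))
      = ENNReal.ofReal (∫ z in Ioi 0, 4 * K * (z * Real.exp (-b * z ^ 2))) := by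
    rw [← ofReal_integral_eq_lintegral_ofReal hint
      ((ae_restrict_iff' measurableSet_Ioi).mpr (Filter.Eventually.of_forall fun z hz => by
        have hz0 : (0:ℝ) ≤ z := le_of_lt hz
        positivity))]
  have hval2 : (∫ z in Ioi 0, 4 * K * (z * Real.exp (-b * z ^ 2)))
      = 4 / c * σ ^ 2 * K := by
    rw [integral_const_mul, integral_mul_exp_neg_mul_sq_Ioi hb]
    rw [hbdef]
    field_simp
  refine ENNReal.toReal_le_of_le_ofReal (by positivity) ?_
  calc ∫⁻ z in Ioi 0, volume {ω | z < f ω} * ENNReal.ofReal (2 * z)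
      ≤ ENNReal.ofReal (∫ z in Ioi 0, 4 * K * (z * Real.exp (-b * z ^ 2))) := by
        rw [← heq2]; exact mono1
    _ = ENNReal.ofReal (4 / c * σ ^ 2 * K) := by rw [hval2]
end

section
/- (Fano-type minimax lower bound for localization) Consider the Gaussian submatrix model with parameter space Θ of all M = λ·1_R 1_C^T, |R| = k_m, |C| = k_n, and |Θ| = C(m,k_m)·C(n,k_n). For any 0 < α < 1 there is a constant C_α > 0 such that if λ/σ ≤ C_α·√(log(m/k_m)/k_n + log(n/k_n)/k_m), then for any estimator (R̂, Ĉ) of the support based on one observation X = M + Z with i.i.d. N(0,σ²) noise, sup_{M∈Θ} P(R̂ ≠ R or Ĉ ≠ C) ≥ 1 − α − log 2/(k_m·log(m/k_m) + k_n·log(n/k_n)). -/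
open MeasureTheory ProbabilityTheory
open scoped ENNReal

/-- The signal matrix `λ·1_R 1_C^T` (as a function `Fin m → Fin n → ℝ`). -/
def signalMatrix (m n : ℕ) (lam : ℝ) (R : Finset (Fin m)) (C : Finset (Fin n)) :
    Fin m → Fin n → ℝ :=
  fun i j => if i ∈ R ∧ j ∈ C then lam else 0

/-- The distribution of `X = M + Z`, with `Z` having i.i.d. `N(0, σ²)` entries. -/
noncomputable def PM (m n : ℕ) (σ : ℝ) (M : Fin m → Fin n → ℝ) :
    Measure (Fin m → Fin n → ℝ) :=
  Measure.pi fun i => Measure.pi fun j => gaussianReal (M i j) (Real.toNNReal (σ ^ 2))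

/-- The parameter space: all pairs of supports of sizes `k_m`, `k_n`. -/
def Θset (m n k_m k_n : ℕ) : Finset (Finset (Fin m) × Finset (Fin n)) :=
  Finset.univ.filter fun p => p.1.card = k_m ∧ p.2.card = k_n

open Real
open scoped NNReal

/-! ### Auxiliary lemmas -/

theorem my_lintegral_pi_prod : ∀ {n : ℕ} {E : Fin n → Type} [∀ i, MeasurableSpace (E i)]
    (μ : ∀ i, Measure (E i)) [∀ i, SigmaFinite (μ i)] (f : ∀ i, E i → ℝ≥0∞)
    (_ : ∀ i, Measurable (f i)),
    ∫⁻ x, ∏ i, f i (x i) ∂Measure.pi μ = ∏ i, ∫⁻ y, f i y ∂μ i := by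
  intro n
  induction n with
  | zero =>
    intro E _ μ _ f hf
    simp [lintegral_const, Measure.pi_univ]
  | succ n ih =>
    intro E _ μ _ f hf
    have hmp := (measurePreserving_piFinSuccAbove μ 0).symm
    have hcomp := hmp.lintegral_comp (f := fun x : ∀ i, E i => ∏ i, f i (x i))
      (by exact Finset.measurable_prod _ fun i _ => (hf i).comp (measurable_pi_apply i))
    rw [← hcomp]
    have heq : ∀ y : E 0 × (∀ j : Fin n, E ((0 : Fin (n+1)).succAbove j)),
        (∏ i, f i (((MeasurableEquiv.piFinSuccAbove E 0).symm y) i))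
          = f 0 y.1 * ∏ j : Fin n, f ((0:Fin (n+1)).succAbove j) (y.2 j) := by
      intro y
      rw [Fin.prod_univ_succ]
      simp [MeasurableEquiv.piFinSuccAbove, Fin.zero_succAbove]
      rfl
    simp_rw [heq]
    have hmeas2 : Measurable fun y : ∀ j : Fin n, E ((0 : Fin (n+1)).succAbove j) =>
        ∏ j : Fin n, f ((0:Fin (n+1)).succAbove j) (y j) :=
      Finset.measurable_prod _ fun j _ => (hf _).comp (measurable_pi_apply j)
    have hmeas3 : Measurable fun a : E 0 × (∀ j : Fin n, E ((0 : Fin (n+1)).succAbove j)) =>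
        f 0 a.1 * ∏ j : Fin n, f ((0:Fin (n+1)).succAbove j) (a.2 j) :=
      ((hf 0).comp measurable_fst).mul (hmeas2.comp measurable_snd)
    rw [lintegral_prod _ hmeas3.aemeasurable]
    have inner : ∀ a : E 0,
        (∫⁻ y, f 0 a * ∏ j : Fin n, f ((0:Fin (n+1)).succAbove j) (y j)
            ∂(Measure.pi fun j : Fin n => μ ((0:Fin (n+1)).succAbove j)))
          = f 0 a * ∏ j : Fin n, ∫⁻ z, f ((0:Fin (n+1)).succAbove j) z
              ∂μ ((0:Fin (n+1)).succAbove j) := by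
      intro a
      rw [lintegral_const_mul _ hmeas2, ih _ _ (fun j => hf _)]
    simp_rw [inner]
    rw [lintegral_mul_const _ (hf 0), Fin.prod_univ_succ]
    simp [Fin.zero_succAbove]
    rfl

theorem my_pi_withDensity {n : ℕ} {E : Fin n → Type} [∀ i, MeasurableSpace (E i)]
    (μ : ∀ i, Measure (E i)) [∀ i, SigmaFinite (μ i)] (f : ∀ i, E i → ℝ≥0∞)
    (hf : ∀ i, Measurable (f i)) (hsf : ∀ i, SigmaFinite ((μ i).withDensity (f i))) :
    Measure.pi (fun i => (μ i).withDensity (f i))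
      = (Measure.pi μ).withDensity (fun x => ∏ i, f i (x i)) := by
  haveI := hsf
  refine Measure.pi_eq fun s hs => ?_
  rw [withDensity_apply _ (MeasurableSet.univ_pi hs)]
  have hind : ∀ x : ∀ i, E i, (Set.univ.pi s).indicator (fun x => ∏ i, f i (x i)) x
      = ∏ i, (s i).indicator (f i) (x i) := by
    intro x
    by_cases hx : x ∈ Set.univ.pi s
    · rw [Set.indicator_of_mem hx]
      refine Finset.prod_congr rfl fun i _ => ?_
      rw [Set.indicator_of_mem (hx i (Set.mem_univ i))]
    · rw [Set.indicator_of_notMem hx]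
      rw [Set.mem_univ_pi] at hx
      push_neg at hx
      obtain ⟨i, hi⟩ := hx
      refine (Finset.prod_eq_zero (Finset.mem_univ i) ?_).symm
      rw [Set.indicator_of_notMem hi]
  rw [← lintegral_indicator (MeasurableSet.univ_pi hs)]
  simp_rw [hind]
  rw [my_lintegral_pi_prod μ _ (fun i => (hf i).indicator (hs i))]
  refine Finset.prod_congr rfl fun i _ => ?_
  rw [withDensity_apply _ (hs i), ← lintegral_indicator (hs i)]

lemma my_gaussianPDFReal_tilt (v : ℝ≥0) (hv : v ≠ 0) (μ0 x : ℝ) :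
    gaussianPDFReal 0 v x * rexp ((μ0 * x - μ0^2/2) / v) = gaussianPDFReal μ0 v x := by
  have hv' : (v : ℝ) ≠ 0 := by exact_mod_cast hv
  unfold gaussianPDFReal
  rw [mul_assoc, ← Real.exp_add]
  congr 1
  field_simp
  ring

lemma my_gaussianReal_eq_withDensity_tilt (v : ℝ≥0) (hv : v ≠ 0) (μ0 : ℝ) :
    gaussianReal μ0 v = (gaussianReal 0 v).withDensity
      (fun x => ENNReal.ofReal (rexp ((μ0 * x - μ0^2/2) / v))) := by
  have hmeas : Measurable fun x : ℝ => ENNReal.ofReal (rexp ((μ0 * x - μ0^2/2) / v)) := by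
    fun_prop
  rw [gaussianReal_of_var_ne_zero _ hv, gaussianReal_of_var_ne_zero _ hv,
    ← withDensity_mul volume (measurable_gaussianPDF 0 v) hmeas]
  congr 1
  funext x
  simp only [Pi.mul_apply, gaussianPDF]
  rw [← ENNReal.ofReal_mul (gaussianPDFReal_nonneg 0 v x), my_gaussianPDFReal_tilt v hv μ0 x]

lemma my_gaussianPDFReal_moment_aux (v : ℝ≥0) (hv : v ≠ 0) (c x : ℝ) :
    gaussianPDFReal 0 v x * rexp (c * x)
      = rexp (v * c^2 / 2) * gaussianPDFReal (v * c) v x := by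
  have hv' : (v : ℝ) ≠ 0 := by exact_mod_cast hv
  unfold gaussianPDFReal
  rw [mul_assoc, ← Real.exp_add]
  have hexp : -(x - 0)^2/(2*(v:ℝ)) + c * x = (v:ℝ) * c^2/2 + -(x - (v:ℝ)*c)^2/(2*(v:ℝ)) := by
    field_simp
    ring
  rw [hexp, Real.exp_add]
  ring

lemma my_lintegral_exp_gaussianReal (v : ℝ≥0) (hv : v ≠ 0) (c : ℝ) :
    ∫⁻ x, ENNReal.ofReal (rexp (c * x)) ∂(gaussianReal 0 v)
      = ENNReal.ofReal (rexp (v * c^2 / 2)) := by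
  have hmeas : Measurable fun x : ℝ => ENNReal.ofReal (rexp (c * x)) := by fun_prop
  rw [gaussianReal_of_var_ne_zero _ hv,
    lintegral_withDensity_eq_lintegral_mul volume (measurable_gaussianPDF 0 v) hmeas]
  have hpt : ∀ x : ℝ, (gaussianPDF 0 v * fun x => ENNReal.ofReal (rexp (c * x))) x
      = ENNReal.ofReal (rexp (v * c^2 / 2)) * gaussianPDF (v * c) v x := by
    intro x
    simp only [Pi.mul_apply, gaussianPDF]
    rw [← ENNReal.ofReal_mul (gaussianPDFReal_nonneg 0 v x),
      my_gaussianPDFReal_moment_aux v hv c x, ENNReal.ofReal_mul (Real.exp_nonneg _)]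
  simp_rw [hpt]
  rw [lintegral_const_mul _ (measurable_gaussianPDF _ v), lintegral_gaussianPDF_eq_one _ hv,
    mul_one]

lemma my_prod_ofReal_exp {ι : Type*} (s : Finset ι) (g : ι → ℝ) :
    ∏ i ∈ s, ENNReal.ofReal (rexp (g i)) = ENNReal.ofReal (rexp (∑ i ∈ s, g i)) := by
  rw [Real.exp_sum]
  exact (ENNReal.ofReal_prod_of_nonneg (fun _ _ => Real.exp_nonneg _)).symm

lemma my_PM_eq_withDensity {m n : ℕ} (v : ℝ≥0) (M : Fin m → Fin n → ℝ) (hv : v ≠ 0) :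
    Measure.pi (fun i : Fin m => Measure.pi fun j : Fin n => gaussianReal (M i j) v)
      = (Measure.pi (fun _ : Fin m => Measure.pi fun _ : Fin n => gaussianReal 0 v)).withDensity
        (fun X => ENNReal.ofReal (rexp (∑ i, ∑ j, (M i j * X i j - (M i j)^2/2) / v))) := by
  have hrow : ∀ i : Fin m, (Measure.pi fun j : Fin n => gaussianReal (M i j) v)
      = (Measure.pi fun _ : Fin n => gaussianReal 0 v).withDensity
        (fun x => ∏ j, ENNReal.ofReal (rexp ((M i j * x j - (M i j)^2/2) / v))) := by
    intro i
    have h := my_pi_withDensity (fun _ : Fin n => gaussianReal 0 v)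
      (fun j x => ENNReal.ofReal (rexp ((M i j * x - (M i j)^2/2) / v)))
      (fun j => by fun_prop)
      (fun j => by rw [← my_gaussianReal_eq_withDensity_tilt v hv]; infer_instance)
    rw [← h]
    congr 1
    funext j
    rw [← my_gaussianReal_eq_withDensity_tilt v hv]
  have houter := my_pi_withDensity (fun _ : Fin m => Measure.pi fun _ : Fin n => gaussianReal 0 v)
    (fun i x => ∏ j, ENNReal.ofReal (rexp ((M i j * x j - (M i j)^2/2) / v)))
    (fun i => Finset.measurable_prod _ fun j _ => by fun_prop)
    (fun i => by rw [← hrow i]; infer_instance)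
  calc Measure.pi (fun i : Fin m => Measure.pi fun j : Fin n => gaussianReal (M i j) v)
      = Measure.pi (fun i : Fin m =>
          (Measure.pi fun _ : Fin n => gaussianReal 0 v).withDensity
          (fun x => ∏ j, ENNReal.ofReal (rexp ((M i j * x j - (M i j)^2/2) / v)))) := by
        congr 1; funext i; exact hrow i
    _ = (Measure.pi (fun _ : Fin m => Measure.pi fun _ : Fin n => gaussianReal 0 v)).withDensity
          (fun X => ∏ i, ∏ j, ENNReal.ofReal (rexp ((M i j * X i j - (M i j)^2/2) / v))) :=
        houter
    _ = _ := by
        congr 1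
        funext X
        simp_rw [my_prod_ofReal_exp]

lemma my_lintegral_exp_PM {m n : ℕ} (v : ℝ≥0) (hv : v ≠ 0) (c : Fin m → Fin n → ℝ) :
    ∫⁻ X, ENNReal.ofReal (rexp (∑ i, ∑ j, c i j * X i j))
        ∂(Measure.pi (fun _ : Fin m => Measure.pi fun _ : Fin n => gaussianReal 0 v))
      = ENNReal.ofReal (rexp (∑ i, ∑ j, (v:ℝ) * (c i j)^2 / 2)) := by
  have h1 : ∀ X : Fin m → Fin n → ℝ, ENNReal.ofReal (rexp (∑ i, ∑ j, c i j * X i j))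
      = ∏ i, ∏ j, ENNReal.ofReal (rexp (c i j * X i j)) := by
    intro X; simp_rw [my_prod_ofReal_exp]
  simp_rw [h1]
  rw [my_lintegral_pi_prod (fun _ : Fin m => Measure.pi fun _ : Fin n => gaussianReal 0 v)
    (fun i (y : Fin n → ℝ) => ∏ j, ENNReal.ofReal (rexp (c i j * y j)))
    (fun i => Finset.measurable_prod _ fun j _ => by fun_prop)]
  have h2 : ∀ i : Fin m, ∫⁻ x : Fin n → ℝ, ∏ j, ENNReal.ofReal (rexp (c i j * x j))
      ∂(Measure.pi fun _ : Fin n => gaussianReal 0 v)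
      = ∏ j, ENNReal.ofReal (rexp ((v:ℝ) * (c i j)^2 / 2)) := by
    intro i
    rw [my_lintegral_pi_prod (fun _ : Fin n => gaussianReal 0 v)
      (fun j (y : ℝ) => ENNReal.ofReal (rexp (c i j * y)))
      (fun j => by fun_prop)]
    exact Finset.prod_congr rfl fun j _ => my_lintegral_exp_gaussianReal v hv (c i j)
  simp_rw [h2, my_prod_ofReal_exp]

lemma my_nat_pow_le_choose_mul_pow : ∀ (k m : ℕ), k ≤ m → m^k ≤ m.choose k * k^k := by
  intro k
  induction k with
  | zero => intro m _; simp
  | succ k ih =>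
    intro m hkm
    obtain ⟨m', rfl⟩ : ∃ m', m = m' + 1 := ⟨m - 1, by omega⟩
    have hkm' : k ≤ m' := by omega
    have hkey : (m' + 1).choose (k+1) * (k+1) = (m' + 1) * m'.choose k := by
      rw [← Nat.add_one_mul_choose_eq]
    have hkk : 0 < k^k := by
      rcases Nat.eq_zero_or_pos k with h | h
      · subst h; simp
      · positivity
    refine Nat.le_of_mul_le_mul_right ?_ hkk
    calc (m'+1)^(k+1) * k^k = (m'+1) * ((m'+1) * k)^k := by rw [mul_pow]; ring
      _ ≤ (m'+1) * (m' * (k+1))^k := by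
          have : (m'+1) * k ≤ m' * (k+1) := by nlinarith
          exact Nat.mul_le_mul_left _ (Nat.pow_le_pow_left this k)
      _ = (m'+1) * (m'^k * (k+1)^k) := by rw [mul_pow]
      _ ≤ (m'+1) * ((m'.choose k * k^k) * (k+1)^k) := by
          exact Nat.mul_le_mul_left _ (Nat.mul_le_mul_right _ (ih m' hkm'))
      _ = ((m'+1) * m'.choose k) * (k+1)^k * k^k := by ring
      _ = ((m'+1).choose (k+1) * (k+1)) * (k+1)^k * k^k := by rw [hkey]
      _ = (m'+1).choose (k+1) * (k+1)^(k+1) * k^k := by ring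

lemma my_exp_le_choose (k m : ℕ) (hk : 1 ≤ k) (hkm : k ≤ m) :
    rexp ((k : ℝ) * Real.log ((m:ℝ)/(k:ℝ))) ≤ (m.choose k : ℝ) := by
  have hk0 : (0:ℝ) < (k:ℝ) := by exact_mod_cast hk
  have hm0 : (0:ℝ) < (m:ℝ) := lt_of_lt_of_le hk0 (by exact_mod_cast hkm)
  have hquot : (0:ℝ) < (m:ℝ)/(k:ℝ) := by positivity
  have h1 : rexp ((k : ℝ) * Real.log ((m:ℝ)/(k:ℝ))) = ((m:ℝ)/(k:ℝ))^k := by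
    rw [mul_comm, Real.exp_mul, Real.exp_log hquot, ← Real.rpow_natCast]
  rw [h1, div_pow, div_le_iff₀ (by positivity)]
  have := my_nat_pow_le_choose_mul_pow k m hkm
  exact_mod_cast this

lemma my_numeric_ineq {D : ℝ} (hD : 0 < D) : D * rexp (-(3/5) * D) ≤ Real.log 2 := by
  set x := 3/5 * D with hxdef
  have hx : (0:ℝ) ≤ x := by positivity
  have htaylor := Real.sum_le_exp_of_nonneg hx 4
  have hsum : ∑ i ∈ Finset.range 4, x^i / (Nat.factorial i)
      = 1 + x + x^2/2 + x^3/6 := by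
    norm_num [Finset.sum_range_succ, Nat.factorial]
  rw [hsum] at htaylor
  have hlog2 : (0.6931471803 : ℝ) < Real.log 2 := Real.log_two_gt_d9
  have hexp : (0:ℝ) < rexp x := Real.exp_pos x
  rw [show -(3/5)*D = -x by rw [hxdef]; ring, Real.exp_neg, mul_inv_le_iff₀' hexp]
  have hD5 : D = 5/3 * x := by rw [hxdef]; ring
  rw [hD5]
  nlinarith [mul_nonneg hx (sq_nonneg (x - 1)), sq_nonneg (x - 1),
    mul_le_mul_of_nonneg_left htaylor (le_of_lt (lt_trans (by norm_num) hlog2)),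
    mul_pos hexp (lt_trans (by norm_num : (0:ℝ) < 0.6931471803) hlog2)]

lemma my_half_le (k M : ℕ) (hk : 1 ≤ k) (hkM : k < M) :
    (1/2 : ℝ) ≤ (k:ℝ) * Real.log ((M:ℝ)/(k:ℝ)) := by
  have hk0 : (0:ℝ) < (k:ℝ) := by exact_mod_cast hk
  have hM0 : (0:ℝ) < (M:ℝ) := by
    have : (0:ℕ) < M := by omega
    exact_mod_cast this
  have hkM' : (k:ℝ) + 1 ≤ (M:ℝ) := by exact_mod_cast hkM
  have hlog : 1 - (k:ℝ)/(M:ℝ) ≤ Real.log ((M:ℝ)/(k:ℝ)) := by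
    have h1 : Real.log ((k:ℝ)/(M:ℝ)) ≤ (k:ℝ)/(M:ℝ) - 1 :=
      Real.log_le_sub_one_of_pos (by positivity)
    have h2 : Real.log ((M:ℝ)/(k:ℝ)) = - Real.log ((k:ℝ)/(M:ℝ)) := by
      rw [← Real.log_inv, inv_div]
    linarith
  have hfrac : (k:ℝ)/(M:ℝ) ≤ (k:ℝ)/((k:ℝ)+1) := by
    apply div_le_div_of_nonneg_left hk0.le (by positivity) hkM'
  have h3 : (1:ℝ)/2 ≤ (k:ℝ) * (1 - (k:ℝ)/((k:ℝ)+1)) := by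
    have : (k:ℝ) * (1 - (k:ℝ)/((k:ℝ)+1)) = (k:ℝ)/((k:ℝ)+1) := by
      field_simp
      ring
    have hk1 : (1:ℝ) ≤ (k:ℝ) := by exact_mod_cast hk
    rw [this, le_div_iff₀ (by positivity)]
    linarith
  calc (1/2 : ℝ) ≤ (k:ℝ) * (1 - (k:ℝ)/((k:ℝ)+1)) := h3
    _ ≤ (k:ℝ) * (1 - (k:ℝ)/(M:ℝ)) := by
        apply mul_le_mul_of_nonneg_left _ hk0.le
        linarith
    _ ≤ (k:ℝ) * Real.log ((M:ℝ)/(k:ℝ)) := mul_le_mul_of_nonneg_left hlog hk0.le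

lemma my_measurable_matsum {m n : ℕ} (c : Fin m → Fin n → ℝ) :
    Measurable fun X : Fin m → Fin n → ℝ => ∑ i, ∑ j, c i j * X i j :=
  Finset.measurable_sum _ fun i _ => Finset.measurable_sum _ fun j _ => by
    have h : Measurable fun X : Fin m → Fin n → ℝ => X i j :=
      (measurable_pi_apply j).comp (measurable_pi_apply i)
    exact h.const_mul _


set_option maxHeartbeats 1000000 in
theorem stmt_12 (α : ℝ) (hα0 : 0 < α) (hα1 : α < 1) :
    ∃ Cα > (0 : ℝ), ∀ (m n k_m k_n : ℕ) (σ lam : ℝ), 0 < σ → 0 < lam →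
      1 ≤ k_m → k_m < m → 1 ≤ k_n → k_n < n →
      lam / σ ≤ Cα * Real.sqrt (Real.log ((m : ℝ) / k_m) / k_n
        + Real.log ((n : ℝ) / k_n) / k_m) →
      ∀ est : (Fin m → Fin n → ℝ) → Finset (Fin m) × Finset (Fin n),
        ∃ p ∈ Θset m n k_m k_n,
          1 - α - Real.log 2 /
              ((k_m : ℝ) * Real.log ((m : ℝ) / k_m) + (k_n : ℝ) * Real.log ((n : ℝ) / k_n)) ≤
            (PM m n σ (signalMatrix m n lam p.1 p.2) {X | est X ≠ p}).toReal := by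
  classical
  set B : ℝ := max (1/5) (Real.log (1/α)) with hBdef
  have hB5 : (1/5 : ℝ) ≤ B := le_max_left _ _
  have hB0 : (0:ℝ) < B := lt_of_lt_of_le (by norm_num) hB5
  set ε : ℝ := 1/(50*B) with hεdef
  have hε0 : (0:ℝ) < ε := by positivity
  refine ⟨Real.sqrt (2 * ε), Real.sqrt_pos.mpr (by positivity), ?_⟩
  intro m n k_m k_n σ lam hσ hlam hkm1 hkmm hkn1 hknn hcond est
  set θ : ℝ := 1/(5*ε) with hθdef
  have hθB : θ = 10*B := by rw [hθdef, hεdef]; field_simp; ring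
  have hθ2 : (2:ℝ) ≤ θ := by rw [hθB]; linarith
  have hθ0 : (0:ℝ) < θ := by linarith
  have hkm0 : (0:ℝ) < (k_m:ℝ) := by exact_mod_cast hkm1
  have hkn0 : (0:ℝ) < (k_n:ℝ) := by exact_mod_cast hkn1
  have hmR : (k_m:ℝ) < (m:ℝ) := by exact_mod_cast hkmm
  have hnR : (k_n:ℝ) < (n:ℝ) := by exact_mod_cast hknn
  set Lm : ℝ := Real.log ((m:ℝ)/(k_m:ℝ)) with hLmdef
  set Ln : ℝ := Real.log ((n:ℝ)/(k_n:ℝ)) with hLndef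
  have hLm0 : 0 < Lm := by rw [hLmdef]; exact Real.log_pos ((one_lt_div hkm0).mpr hmR)
  have hLn0 : 0 < Ln := by rw [hLndef]; exact Real.log_pos ((one_lt_div hkn0).mpr hnR)
  set D : ℝ := (k_m:ℝ)*Lm + (k_n:ℝ)*Ln with hDdef
  have hD0 : 0 < D := by positivity
  have hD1 : (1:ℝ) ≤ D := by
    have h1 := my_half_le k_m m hkm1 hkmm
    have h2 := my_half_le k_n n hkn1 hknn
    rw [← hLmdef] at h1
    rw [← hLndef] at h2
    rw [hDdef]
    linarith
  set u : ℝ := 2/5*D with hudef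
  clear_value B ε θ Lm Ln D u
  set v : ℝ≥0 := Real.toNNReal (σ^2) with hvdef
  have hσ2 : (0:ℝ) < σ^2 := by positivity
  have hσne : σ ≠ 0 := ne_of_gt hσ
  have hvne : v ≠ 0 := by
    rw [hvdef]
    simp only [ne_eq, Real.toNNReal_eq_zero, not_le]
    exact hσ2
  have hvR : (v:ℝ) = σ^2 := Real.coe_toNNReal _ hσ2.le
  set N : ℕ := m.choose k_m * n.choose k_n with hNdef
  have hΘcard : (Θset m n k_m k_n).card = N := by
    rw [hNdef]
    have hsplit : Θset m n k_m k_n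
        = (Finset.univ.filter fun s : Finset (Fin m) => s.card = k_m) ×ˢ
          (Finset.univ.filter fun t : Finset (Fin n) => t.card = k_n) := by
      ext q
      simp [Θset, Finset.mem_product]
    rw [hsplit, Finset.card_product]
    congr 1
    · have h : (Finset.univ.filter fun s : Finset (Fin m) => s.card = k_m)
          = Finset.powersetCard k_m (Finset.univ : Finset (Fin m)) := by
        ext s; simp [Finset.mem_powersetCard]
      rw [h, Finset.card_powersetCard, Finset.card_univ, Fintype.card_fin]
    · have h : (Finset.univ.filter fun t : Finset (Fin n) => t.card = k_n)
          = Finset.powersetCard k_n (Finset.univ : Finset (Fin n)) := by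
        ext s; simp [Finset.mem_powersetCard]
      rw [h, Finset.card_powersetCard, Finset.card_univ, Fintype.card_fin]
  have hNR : Real.exp D ≤ (N:ℝ) := by
    rw [hDdef, Real.exp_add, hNdef, Nat.cast_mul, hLmdef, hLndef]
    exact mul_le_mul (my_exp_le_choose k_m m hkm1 hkmm.le)
      (my_exp_le_choose k_n n hkn1 hknn.le) (Real.exp_pos _).le (by positivity)
  have hN0 : (0:ℝ) < (N:ℝ) := lt_of_lt_of_le (Real.exp_pos D) hNR
  clear_value N
  have hprob : ∀ M : Fin m → Fin n → ℝ, IsProbabilityMeasure (PM m n σ M) := by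
    intro M; unfold PM; infer_instance
  haveI hQprob : IsProbabilityMeasure (PM m n σ (fun _ _ => (0:ℝ))) := hprob _
  set S : (Finset (Fin m) × Finset (Fin n)) → Set (Fin m → Fin n → ℝ) :=
    fun p => (toMeasurable (PM m n σ (signalMatrix m n lam p.1 p.2)) {X | est X ≠ p})ᶜ
    with hSdef
  have hSmeas : ∀ p, MeasurableSet (S p) := fun p => (measurableSet_toMeasurable _ _).compl
  have hSsub : ∀ p X, X ∈ S p → est X = p := by
    intro p X hX
    by_contra hne
    exact hX (subset_toMeasurable _ _ hne)
  have hdisj : (↑(Θset m n k_m k_n) : Set (Finset (Fin m) × Finset (Fin n))).PairwiseDisjoint S := by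
    intro p _ q _ hpq
    refine Set.disjoint_left.mpr fun X hXp hXq => hpq ?_
    rw [← hSsub p X hXp, ← hSsub q X hXq]
  have hsum : ∑ p ∈ Θset m n k_m k_n, ((PM m n σ (fun _ _ => (0:ℝ))) (S p)).toReal ≤ 1 := by
    rw [← ENNReal.toReal_sum (fun p _ => measure_ne_top _ _),
      ← measure_biUnion_finset hdisj (fun p _ => hSmeas p)]
    have hle : (PM m n σ (fun _ _ => (0:ℝ))) (⋃ p ∈ Θset m n k_m k_n, S p) ≤ 1 := prob_le_one
    calc ((PM m n σ (fun _ _ => (0:ℝ))) (⋃ p ∈ Θset m n k_m k_n, S p)).toReal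
        ≤ (1:ℝ≥0∞).toReal := ENNReal.toReal_mono (by norm_num) hle
      _ = 1 := by simp
  have hΘne : (Θset m n k_m k_n).Nonempty := by
    obtain ⟨R0, _, hR0⟩ := Finset.exists_subset_card_eq
      (show k_m ≤ (Finset.univ : Finset (Fin m)).card by
        rw [Finset.card_univ, Fintype.card_fin]; omega)
    obtain ⟨C0, _, hC0⟩ := Finset.exists_subset_card_eq
      (show k_n ≤ (Finset.univ : Finset (Fin n)).card by
        rw [Finset.card_univ, Fintype.card_fin]; omega)
    exact ⟨(R0, C0), by simp [Θset, hR0, hC0]⟩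
  obtain ⟨p, hpΘ, hpQ⟩ : ∃ p ∈ Θset m n k_m k_n,
      ((PM m n σ (fun _ _ => (0:ℝ))) (S p)).toReal ≤ 1/(N:ℝ) := by
    apply Finset.exists_le_of_sum_le hΘne
    calc ∑ p ∈ Θset m n k_m k_n, ((PM m n σ (fun _ _ => (0:ℝ))) (S p)).toReal
        ≤ 1 := hsum
      _ = ∑ _p ∈ Θset m n k_m k_n, 1/(N:ℝ) := by
          rw [Finset.sum_const, hΘcard, nsmul_eq_mul]
          field_simp
  refine ⟨p, hpΘ, ?_⟩
  set Mp : Fin m → Fin n → ℝ := signalMatrix m n lam p.1 p.2 with hMpdef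
  obtain ⟨hRcard, hCcard⟩ : p.1.card = k_m ∧ p.2.card = k_n := by
    simpa [Θset] using hpΘ
  have hSM : ∑ i, ∑ j, (Mp i j)^2 = lam^2 * ((k_m:ℝ)*(k_n:ℝ)) := by
    rw [hMpdef]
    unfold signalMatrix
    have h1 : ∀ (i : Fin m) (j : Fin n),
        (if i ∈ p.1 ∧ j ∈ p.2 then lam else 0)^2 = if i ∈ p.1 ∧ j ∈ p.2 then lam^2 else 0 := by
      intro i j; split <;> simp
    simp_rw [h1]
    have h2 : ∀ i : Fin m, (∑ j, if i ∈ p.1 ∧ j ∈ p.2 then lam^2 else 0)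
        = if i ∈ p.1 then (k_n:ℝ)*lam^2 else 0 := by
      intro i
      by_cases hi : i ∈ p.1
      · simp only [hi, true_and, if_true]
        rw [Finset.sum_ite_mem, Finset.univ_inter, Finset.sum_const, hCcard, nsmul_eq_mul]
      · simp [hi]
    simp_rw [h2]
    rw [Finset.sum_ite_mem, Finset.univ_inter, Finset.sum_const, hRcard, nsmul_eq_mul]
    ring
  set K : ℝ := lam^2*((k_m:ℝ)*(k_n:ℝ))/(2*σ^2) with hKdef
  have hK0 : 0 < K := by rw [hKdef]; positivity
  clear_value K
  have hKε : K ≤ ε*D := by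
    have hS0 : (0:ℝ) ≤ Lm/(k_n:ℝ) + Ln/(k_m:ℝ) := by positivity
    have hsq : (lam/σ)^2 ≤ 2*ε*(Lm/(k_n:ℝ) + Ln/(k_m:ℝ)) := by
      have h1 : (lam/σ)^2 ≤ (Real.sqrt (2*ε) * Real.sqrt (Lm/(k_n:ℝ) + Ln/(k_m:ℝ)))^2 :=
        pow_le_pow_left₀ (by positivity) hcond 2
      rwa [mul_pow, Real.sq_sqrt (by positivity), Real.sq_sqrt hS0] at h1
    have hid : (Lm/(k_n:ℝ) + Ln/(k_m:ℝ)) * ((k_m:ℝ)*(k_n:ℝ)) = D := by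
      rw [hDdef]; field_simp
    have h2 := mul_le_mul_of_nonneg_right hsq
      (by positivity : (0:ℝ) ≤ (k_m:ℝ)*(k_n:ℝ)/2)
    calc K = (lam/σ)^2 * ((k_m:ℝ)*(k_n:ℝ)/2) := by rw [hKdef]; field_simp
      _ ≤ 2*ε*(Lm/(k_n:ℝ) + Ln/(k_m:ℝ)) * ((k_m:ℝ)*(k_n:ℝ)/2) := h2
      _ = ε*D := by rw [← hid]; ring
  set ℓ : (Fin m → Fin n → ℝ) → ℝ :=
    fun X => (∑ i, ∑ j, (Mp i j/σ^2) * X i j) - K with hℓdef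
  have hℓmeas : Measurable ℓ := by
    rw [hℓdef]
    exact (my_measurable_matsum _).sub measurable_const
  have hPd : PM m n σ Mp = (PM m n σ (fun _ _ => (0:ℝ))).withDensity
      (fun X => ENNReal.ofReal (rexp (ℓ X))) := by
    have h := my_PM_eq_withDensity v Mp hvne
    have hPM1 : PM m n σ Mp
        = Measure.pi (fun i : Fin m => Measure.pi fun j : Fin n => gaussianReal (Mp i j) v) := rfl
    have hPM0 : PM m n σ (fun _ _ => (0:ℝ))
        = Measure.pi (fun _ : Fin m => Measure.pi fun _ : Fin n => gaussianReal 0 v) := rfl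
    rw [hPM1, hPM0, h]
    congr 1
    funext X
    congr 2
    have hterm : ∀ (i : Fin m) (j : Fin n),
        (Mp i j * X i j - (Mp i j)^2/2)/(v:ℝ)
          = (Mp i j/σ^2) * X i j - (Mp i j)^2/(2*σ^2) := by
      intro i j; rw [hvR]; field_simp
    simp_rw [hterm, Finset.sum_sub_distrib]
    rw [hℓdef]
    congr 1
    simp_rw [← Finset.sum_div]
    rw [hSM, hKdef]
  set Bs : Set (Fin m → Fin n → ℝ) := {X | ℓ X ≤ u} with hBsdef
  have hBmeas : MeasurableSet Bs := measurableSet_le hℓmeas measurable_const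
  haveI hPprob : IsProbabilityMeasure (PM m n σ Mp) := hprob _
  have e1 : PM m n σ Mp (S p ∩ Bs)
      ≤ ENNReal.ofReal (rexp u) * (PM m n σ (fun _ _ => (0:ℝ))) (S p) := by
    rw [hPd, withDensity_apply _ ((hSmeas p).inter hBmeas)]
    calc ∫⁻ X in S p ∩ Bs, ENNReal.ofReal (rexp (ℓ X)) ∂(PM m n σ (fun _ _ => (0:ℝ)))
        ≤ ∫⁻ _ in S p ∩ Bs, ENNReal.ofReal (rexp u) ∂(PM m n σ (fun _ _ => (0:ℝ))) := by
          apply setLIntegral_mono measurable_const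
          intro X hX
          exact ENNReal.ofReal_le_ofReal (Real.exp_le_exp.mpr hX.2)
      _ = ENNReal.ofReal (rexp u) * (PM m n σ (fun _ _ => (0:ℝ))) (S p ∩ Bs) :=
          setLIntegral_const _ _
      _ ≤ _ := mul_le_mul_right (measure_mono Set.inter_subset_left) _
  have hexpo : θ*(θ+1)*K - θ*u ≤ Real.log α := by
    have hθε : θ*ε = 1/5 := by rw [hθdef]; field_simp
    have s1 : θ*(θ+1)*K ≤ θ*(θ+1)*(ε*D) := mul_le_mul_of_nonneg_left hKε (by positivity)
    have s2 : θ*(θ+1)*(ε*D) - θ*u = ((1-θ)/5)*D := by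
      rw [hudef]
      have : θ*(θ+1)*(ε*D) - θ*(2/5*D) = ((θ*ε)*θ + (θ*ε) - 2*θ/5)*D := by ring
      rw [this, hθε]; ring
    have s3 : ((1-θ)/5)*D ≤ (1-θ)/5 := by
      nlinarith [mul_nonneg (by linarith : (0:ℝ) ≤ θ-1) (by linarith : (0:ℝ) ≤ D-1)]
    have hlogα : Real.log (1/α) ≤ B := by rw [hBdef]; exact le_max_right _ _
    have hloginv : Real.log (1/α) = -Real.log α := by rw [one_div, Real.log_inv]
    have s4 : (1-θ)/5 ≤ -B := by rw [hθB]; linarith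
    linarith
  have e2 : PM m n σ Mp Bsᶜ ≤ ENNReal.ofReal α := by
    rw [hPd, withDensity_apply _ hBmeas.compl]
    set c : Fin m → Fin n → ℝ := fun i j => (1+θ)*Mp i j/σ^2 with hcdef
    have hcX : ∀ X : Fin m → Fin n → ℝ,
        ∑ i, ∑ j, c i j * X i j = (1+θ) * ∑ i, ∑ j, (Mp i j/σ^2) * X i j := by
      intro X
      rw [Finset.mul_sum]
      refine Finset.sum_congr rfl fun i _ => ?_
      rw [Finset.mul_sum]
      refine Finset.sum_congr rfl fun j _ => ?_
      rw [hcdef]; ring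
    have hmeas2 : Measurable fun X => ENNReal.ofReal (rexp ((1+θ)*ℓ X - θ*u)) :=
      (Real.measurable_exp.comp ((hℓmeas.const_mul (1+θ)).sub measurable_const)).ennreal_ofReal
    have step1 : ∫⁻ X in Bsᶜ, ENNReal.ofReal (rexp (ℓ X)) ∂(PM m n σ (fun _ _ => (0:ℝ)))
        ≤ ∫⁻ X, ENNReal.ofReal (rexp ((1+θ)*ℓ X - θ*u)) ∂(PM m n σ (fun _ _ => (0:ℝ))) := by
      refine le_trans (setLIntegral_mono hmeas2 fun X hX => ?_) (setLIntegral_le_lintegral _ _)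
      have hXu : u < ℓ X := by
        have : ¬ (ℓ X ≤ u) := hX
        linarith [not_le.mp this]
      apply ENNReal.ofReal_le_ofReal
      apply Real.exp_le_exp.mpr
      nlinarith [mul_nonneg hθ0.le (sub_nonneg.mpr hXu.le)]
    have hmeasc : Measurable fun X : Fin m → Fin n → ℝ =>
        ENNReal.ofReal (rexp (∑ i, ∑ j, c i j * X i j)) :=
      (Real.measurable_exp.comp (my_measurable_matsum c)).ennreal_ofReal
    have step2 : ∫⁻ X, ENNReal.ofReal (rexp ((1+θ)*ℓ X - θ*u)) ∂(PM m n σ (fun _ _ => (0:ℝ)))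
        = ENNReal.ofReal (rexp (θ*(θ+1)*K - θ*u)) := by
      have hpt : ∀ X : Fin m → Fin n → ℝ, ENNReal.ofReal (rexp ((1+θ)*ℓ X - θ*u))
          = ENNReal.ofReal (rexp (∑ i, ∑ j, c i j * X i j))
            * ENNReal.ofReal (rexp (-(1+θ)*K - θ*u)) := by
        intro X
        rw [← ENNReal.ofReal_mul (Real.exp_nonneg _), ← Real.exp_add]
        congr 2
        rw [hcX X, hℓdef]
        ring
      simp_rw [hpt]
      rw [lintegral_mul_const _ hmeasc]
      rw [show (PM m n σ (fun _ _ => (0:ℝ)))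
        = Measure.pi (fun _ : Fin m => Measure.pi fun _ : Fin n => gaussianReal 0 v) from rfl]
      rw [my_lintegral_exp_PM v hvne c]
      rw [← ENNReal.ofReal_mul (Real.exp_nonneg _), ← Real.exp_add]
      congr 2
      have hsc : ∑ i, ∑ j, (v:ℝ)*(c i j)^2/2 = (1+θ)^2*K := by
        have h1 : ∀ (i : Fin m) (j : Fin n),
            (v:ℝ)*(c i j)^2/2 = ((1+θ)^2/(2*σ^2))*(Mp i j)^2 := by
          intro i j; rw [hvR, hcdef]; field_simp
        simp_rw [h1, ← Finset.mul_sum]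
        rw [hSM, hKdef]
        field_simp
      rw [hsc]; ring
    refine (step1.trans (le_of_eq step2)).trans (ENNReal.ofReal_le_ofReal ?_)
    calc rexp (θ*(θ+1)*K - θ*u) ≤ rexp (Real.log α) := Real.exp_le_exp.mpr hexpo
      _ = α := Real.exp_log hα0
  have hmain : PM m n σ Mp (S p)
      ≤ ENNReal.ofReal (rexp u) * (PM m n σ (fun _ _ => (0:ℝ))) (S p) + ENNReal.ofReal α := by
    calc PM m n σ Mp (S p) ≤ PM m n σ Mp (S p ∩ Bs) + PM m n σ Mp (S p \ Bs) :=
        measure_le_inter_add_diff _ _ _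
      _ ≤ ENNReal.ofReal (rexp u) * (PM m n σ (fun _ _ => (0:ℝ))) (S p) + ENNReal.ofReal α :=
        add_le_add e1 ((measure_mono fun X hX => hX.2).trans e2)
  have htoReal : (PM m n σ Mp (S p)).toReal ≤ rexp u * (1/(N:ℝ)) + α := by
    have hmulne : ENNReal.ofReal (rexp u) * (PM m n σ (fun _ _ => (0:ℝ))) (S p) ≠ ⊤ :=
      ENNReal.mul_ne_top ENNReal.ofReal_ne_top (measure_ne_top _ _)
    have hne : ENNReal.ofReal (rexp u) * (PM m n σ (fun _ _ => (0:ℝ))) (S p)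
        + ENNReal.ofReal α ≠ ⊤ :=
      ENNReal.add_ne_top.mpr ⟨hmulne, ENNReal.ofReal_ne_top⟩
    have h1 := ENNReal.toReal_mono hne hmain
    rw [ENNReal.toReal_add hmulne ENNReal.ofReal_ne_top, ENNReal.toReal_mul,
      ENNReal.toReal_ofReal (Real.exp_nonneg _), ENNReal.toReal_ofReal hα0.le] at h1
    have h2 : rexp u * ((PM m n σ (fun _ _ => (0:ℝ))) (S p)).toReal ≤ rexp u * (1/(N:ℝ)) :=
      mul_le_mul_of_nonneg_left hpQ (Real.exp_nonneg _)
    linarith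
  have hlast : rexp u * (1/(N:ℝ)) ≤ Real.log 2 / D := by
    have h1 : (1:ℝ)/(N:ℝ) ≤ rexp (-D) := by
      rw [one_div, Real.exp_neg]
      exact inv_anti₀ (Real.exp_pos D) hNR
    have h2 : rexp u * rexp (-D) = rexp (-(3/5)*D) := by
      rw [← Real.exp_add, hudef]; congr 1; ring
    have h3 : rexp (-(3/5)*D) ≤ Real.log 2 / D := by
      rw [le_div_iff₀ hD0, mul_comm]
      exact my_numeric_ineq hD0
    calc rexp u * (1/(N:ℝ)) ≤ rexp u * rexp (-D) :=
        mul_le_mul_of_nonneg_left h1 (Real.exp_nonneg _)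
      _ = rexp (-(3/5)*D) := h2
      _ ≤ Real.log 2 / D := h3
  have hcompl : (PM m n σ Mp (S p)).toReal + (PM m n σ Mp ((S p)ᶜ)).toReal = 1 := by
    rw [← ENNReal.toReal_add (measure_ne_top _ _) (measure_ne_top _ _),
      measure_add_measure_compl (hSmeas p), measure_univ, ENNReal.toReal_one]
  have herr : PM m n σ Mp {X | est X ≠ p} = PM m n σ Mp ((S p)ᶜ) := by
    rw [hSdef]
    simp only [compl_compl]
    exact (measure_toMeasurable _).symm
  rw [herr]
  linarith [htoReal, hlast, hcompl]
end
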